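/- Let ρ ∈ Matrix (Fin d) (Fin d) ℂ be positive definite with trace 1, and let A be a measurement with n outcomes on ℂ^d all of whose effects are nonzero. Then the trace of F_ρ(A), which equals the real number ∑ x, tr(ρ * A x * A x) / tr(ρ * A x), is at most n; moreover it equals n if and only if every effect A x is an orthogonal projection, i.e., A x * A x = A x for all x. -/

import Mathlib

open Matrix
open scoped Kronecker ComplexOrder

noncomputable section

/-- A measurement (POVM): a finite family of positive semidefinite matrices summing to `1`. -/
def IsMeasurement {ι κ : Type*} [Fintype ι] [DecidableEq ι] [Fintype κ]
    (A : κ → Matrix ι ι ℂ) : Prop :=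
  (∀ x, (A x).PosSemidef) ∧ ∑ x, A x = 1

/-- `A` is a post-processing of `B`: `A ⪯ B`. -/
def PostProc {ι : Type*} {n m : ℕ}
    (A : Fin n → Matrix ι ι ℂ) (B : Fin m → Matrix ι ι ℂ) : Prop :=
  ∃ μ : Fin n → Fin m → ℝ,
    (∀ x y, 0 ≤ μ x y) ∧ (∀ y, ∑ x, μ x y = 1) ∧
    (∀ x, A x = ∑ y, (μ x y : ℂ) • B y)

/-- The outer product `|E⟩⟨F|` of the vectorizations of two matrices. -/
def outerProd {ι : Type*} (E F : Matrix ι ι ℂ) : Matrix (ι × ι) (ι × ι) ℂ :=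
  Matrix.of fun p q => E p.1 p.2 * star (F q.1 q.2)

/-- The positive semidefinite square root of a positive semidefinite matrix
(the definition `Matrix.PosSemidef.sqrt` of the older Mathlib, since removed). -/
noncomputable def Matrix.PosSemidef.sqrt {n : Type*} [Fintype n] [DecidableEq n]
    {A : Matrix n n ℂ} (hA : A.PosSemidef) : Matrix n n ℂ :=
  hA.1.eigenvectorUnitary.1 * diagonal ((↑) ∘ (√·) ∘ hA.1.eigenvalues) *
    (star hA.1.eigenvectorUnitary : Matrix n n ℂ)

/-- The (un-normalized) Fisher information map of a measurement. -/
noncomputable def Fisher {ι κ : Type*} [Fintype ι] [Fintype κ]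
    (A : κ → Matrix ι ι ℂ) : Matrix (ι × ι) (ι × ι) ℂ :=
  ∑ x, (Matrix.trace (A x))⁻¹ • outerProd (A x) (A x)

/-- The generalized Fisher information map of a measurement, relative to a
positive definite state `ρ` (with positive semidefinite square root `ρ^{1/2}`). -/
noncomputable def FisherRho {ι κ : Type*} [Fintype ι] [DecidableEq ι] [Fintype κ]
    {ρ : Matrix ι ι ℂ} (hρ : ρ.PosDef) (A : κ → Matrix ι ι ℂ) :
    Matrix (ι × ι) (ι × ι) ℂ :=
  ∑ x, (Matrix.trace (ρ * A x))⁻¹ •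
    outerProd (hρ.posSemidef.sqrt * A x) (hρ.posSemidef.sqrt * A x)

/-- The height of a finite family of self-adjoint matrices: the infimum of the traces of
Hermitian matrices dominating every member in the Loewner order. -/
noncomputable def height {ι κ : Type*} [Fintype ι] [Fintype κ]
    (X : κ → Matrix ι ι ℂ) : ℝ :=
  sInf { t : ℝ | ∃ H : Matrix ι ι ℂ, H.IsHermitian ∧
    (∀ i, (H - X i).PosSemidef) ∧ t = (Matrix.trace H).re }

lemma Matrix.PosSemidef.sqrt_mul_self {n : Type*} [Fintype n] [DecidableEq n]
    {A : Matrix n n ℂ} (hA : A.PosSemidef) : hA.sqrt * hA.sqrt = A := by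
  have hU : (star hA.1.eigenvectorUnitary : Matrix n n ℂ) * (hA.1.eigenvectorUnitary : Matrix n n ℂ) = 1 :=
    Unitary.coe_star_mul_self _
  have hD : diagonal (((↑) ∘ (√·) ∘ hA.1.eigenvalues : n → ℂ)) * diagonal ((↑) ∘ (√·) ∘ hA.1.eigenvalues)
      = diagonal (RCLike.ofReal ∘ hA.1.eigenvalues : n → ℂ) := by
    rw [diagonal_mul_diagonal]; congr 1; funext i
    simp [← Complex.ofReal_mul, Real.mul_self_sqrt (hA.eigenvalues_nonneg i)]
  unfold Matrix.PosSemidef.sqrt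
  conv_rhs => rw [hA.1.spectral_theorem, Unitary.conjStarAlgAut_apply, ← hD]
  simp only [Matrix.mul_assoc]
  rw [← Matrix.mul_assoc (star hA.1.eigenvectorUnitary : Matrix n n ℂ), hU, Matrix.one_mul]

lemma Matrix.PosSemidef.posSemidef_sqrt {n : Type*} [Fintype n] [DecidableEq n]
    {A : Matrix n n ℂ} (hA : A.PosSemidef) : hA.sqrt.PosSemidef := by
  unfold Matrix.PosSemidef.sqrt
  rw [Matrix.star_eq_conjTranspose]
  refine (posSemidef_diagonal_iff.mpr fun i => ?_).mul_mul_conjTranspose_same _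
  exact Complex.zero_le_real.mpr (Real.sqrt_nonneg _)

lemma posSemidef_iff_eq_transpose_mul_self {n : Type*} [Fintype n] [DecidableEq n]
    {A : Matrix n n ℂ} : A.PosSemidef ↔ ∃ B : Matrix n n ℂ, A = Bᴴ * B :=
  ⟨fun hA => ⟨hA.sqrt, by rw [hA.posSemidef_sqrt.isHermitian.eq, hA.sqrt_mul_self]⟩,
   fun ⟨B, hB⟩ => hB ▸ posSemidef_conjTranspose_mul_self B⟩

lemma trace_self_conjTranspose {m : Type*} [Fintype m] (M : Matrix m m ℂ) :
    Matrix.trace (M * Mᴴ) = ((∑ i, ∑ j, Complex.normSq (M i j) : ℝ) : ℂ) := by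
  push_cast
  simp [Matrix.trace, Matrix.diag, Matrix.mul_apply, Matrix.conjTranspose_apply,
    Complex.mul_conj]

lemma trace_outerProd_eq {m : Type*} [Fintype m] (E : Matrix m m ℂ) :
    Matrix.trace (outerProd E E) = Matrix.trace (E * Eᴴ) := by
  simp [outerProd, Matrix.trace, Matrix.diag, Matrix.mul_apply, Matrix.conjTranspose_apply,
    Fintype.sum_prod_type]

lemma key_trace {d : ℕ} {ρ : Matrix (Fin d) (Fin d) ℂ} (hρ : ρ.PosDef)
    {B : Matrix (Fin d) (Fin d) ℂ} (hB : B.PosSemidef) :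
    ∃ r : ℝ, 0 ≤ r ∧ Matrix.trace (ρ * B) = (r : ℂ) ∧ (r = 0 → B = 0) := by
  obtain ⟨C, hC⟩ := posSemidef_iff_eq_transpose_mul_self.mp hB
  set s := hρ.posSemidef.sqrt with hs
  have hss : s * s = ρ := hρ.posSemidef.sqrt_mul_self
  have hsH : sᴴ = s := hρ.posSemidef.posSemidef_sqrt.isHermitian
  have hdet : s.det ≠ 0 := by
    intro h
    have : ρ.det = 0 := by rw [← hss, Matrix.det_mul, h, mul_zero]
    exact (hρ.det_pos).ne' this
  have h1 : Matrix.trace (ρ * B) = Matrix.trace ((C * s) * (C * s)ᴴ) := by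
    rw [hC, ← Matrix.mul_assoc, Matrix.trace_mul_cycle, conjTranspose_mul, hsH,
      Matrix.mul_assoc, ← hss]
    simp only [Matrix.mul_assoc]
  refine ⟨∑ i, ∑ j, Complex.normSq ((C * s) i j),
    Finset.sum_nonneg fun i _ => Finset.sum_nonneg fun j _ => Complex.normSq_nonneg _, by
    rw [h1, trace_self_conjTranspose], fun h => ?_⟩
  have hCs : C * s = 0 := by
    ext i j
    have hnn : ∀ i ∈ (Finset.univ : Finset (Fin d)), (0:ℝ) ≤ ∑ j, Complex.normSq ((C*s) i j) :=
      fun i _ => Finset.sum_nonneg fun j _ => Complex.normSq_nonneg _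
    have h1 := (Finset.sum_eq_zero_iff_of_nonneg hnn).mp h i (Finset.mem_univ i)
    have h2 := (Finset.sum_eq_zero_iff_of_nonneg (fun j _ => Complex.normSq_nonneg _)).mp h1 j
      (Finset.mem_univ j)
    simpa using Complex.normSq_eq_zero.mp h2
  have hC0 : C = 0 := by
    have := congrArg (· * s⁻¹) hCs
    simpa [Matrix.mul_assoc, Matrix.mul_nonsing_inv s (isUnit_iff_ne_zero.mpr hdet)] using this
  rw [hC, hC0]
  simp

lemma sub_sq_posSemidef {d : ℕ} {B : Matrix (Fin d) (Fin d) ℂ} (hB : B.PosSemidef)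
    (h1 : (1 - B).PosSemidef) : (B - B * B).PosSemidef := by
  obtain ⟨q, hqH, hqq⟩ : ∃ q : Matrix (Fin d) (Fin d) ℂ, qᴴ = q ∧ q * q = B :=
    ⟨hB.sqrt, hB.posSemidef_sqrt.isHermitian, hB.sqrt_mul_self⟩
  have h2 : (qᴴ * (1 - B) * q).PosSemidef := h1.conjTranspose_mul_mul_same q
  have h4 : q * B * q = B * B := by
    rw [← hqq]
    simp only [Matrix.mul_assoc]
  have h3 : qᴴ * (1 - B) * q = B - B * B := by
    rw [hqH, Matrix.mul_sub, Matrix.mul_one, Matrix.sub_mul, hqq, h4]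
  rwa [h3] at h2

lemma one_sub_posSemidef {d n : ℕ} (A : Fin n → Matrix (Fin d) (Fin d) ℂ)
    (hpsd : ∀ x, (A x).PosSemidef) (hsum : ∑ x, A x = 1) (x : Fin n) :
    (1 - A x).PosSemidef := by
  have h : (1 : Matrix (Fin d) (Fin d) ℂ) - A x = ∑ y ∈ Finset.univ.erase x, A y := by
    rw [← hsum, ← Finset.sum_erase_add _ _ (Finset.mem_univ x)]
    exact add_sub_cancel_right _ _
  rw [h]
  exact Finset.sum_induction A Matrix.PosSemidef (fun a b ha hb => ha.add hb)
    Matrix.PosSemidef.zero (fun y _ => hpsd y)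

/-- Upper bound n (the number of outcomes) on the trace of the generalized Fisher
information matrix, with equality iff every effect is an orthogonal projection. -/
theorem stmt7 {d n : ℕ} {ρ : Matrix (Fin d) (Fin d) ℂ} (hρ : ρ.PosDef)
    (hρtr : Matrix.trace ρ = 1)
    (A : Fin n → Matrix (Fin d) (Fin d) ℂ) (hA : IsMeasurement A) (hA0 : ∀ x, A x ≠ 0)
    (T : ℝ) (hT : (T : ℂ) = ∑ x, Matrix.trace (ρ * A x * A x) / Matrix.trace (ρ * A x)) :
    Matrix.trace (FisherRho hρ A) = (T : ℂ) ∧ T ≤ (n : ℝ) ∧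
      (T = (n : ℝ) ↔ ∀ x, A x * A x = A x) := by
  obtain ⟨hpsd, hsum⟩ := hA
  have hss : hρ.posSemidef.sqrt * hρ.posSemidef.sqrt = ρ := hρ.posSemidef.sqrt_mul_self
  have hsH : hρ.posSemidef.sqrtᴴ = hρ.posSemidef.sqrt := hρ.posSemidef.posSemidef_sqrt.isHermitian
  choose a ha0 haeq hax using fun x => key_trace hρ (hpsd x)
  have hapos : ∀ x, 0 < a x := fun x =>
    lt_of_le_of_ne (ha0 x) (fun h => hA0 x (hax x h.symm))
  choose c hc0 hceq hcx using fun x =>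
    key_trace hρ (sub_sq_posSemidef (hpsd x) (one_sub_posSemidef A hpsd hsum x))
  have hb : ∀ x, Matrix.trace (ρ * A x * A x) = ((a x - c x : ℝ) : ℂ) := by
    intro x
    have h := hceq x
    rw [Matrix.mul_sub, Matrix.trace_sub, haeq x, ← Matrix.mul_assoc] at h
    push_cast
    linear_combination -h
  have hterm : ∀ x, Matrix.trace ((Matrix.trace (ρ * A x))⁻¹ •
      outerProd (hρ.posSemidef.sqrt * A x) (hρ.posSemidef.sqrt * A x))
      = Matrix.trace (ρ * A x * A x) / Matrix.trace (ρ * A x) := by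
    intro x
    rw [Matrix.trace_smul, smul_eq_mul, trace_outerProd_eq]
    have hE : (hρ.posSemidef.sqrt * A x) * (hρ.posSemidef.sqrt * A x)ᴴ
        = hρ.posSemidef.sqrt * (A x * A x) * hρ.posSemidef.sqrt := by
      rw [conjTranspose_mul, hsH, (hpsd x).isHermitian.eq]
      simp only [Matrix.mul_assoc]
    rw [hE]
    have htr : Matrix.trace (hρ.posSemidef.sqrt * (A x * A x) * hρ.posSemidef.sqrt)
        = Matrix.trace (ρ * A x * A x) := by
      rw [Matrix.trace_mul_comm (hρ.posSemidef.sqrt * (A x * A x)) hρ.posSemidef.sqrt,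
        ← Matrix.mul_assoc, hss, ← Matrix.mul_assoc]
    rw [htr, div_eq_mul_inv, mul_comm]
  have part1 : Matrix.trace (FisherRho hρ A) = (T : ℂ) := by
    rw [hT, FisherRho, Matrix.trace_sum]
    exact Finset.sum_congr rfl fun x _ => hterm x
  have hTr : T = ∑ x, (a x - c x) / a x := by
    have h : (T : ℂ) = ((∑ x, (a x - c x) / a x : ℝ) : ℂ) := by
      rw [hT]
      push_cast
      exact Finset.sum_congr rfl fun x _ => by rw [hb x, haeq x]; push_cast; ring
    exact_mod_cast h
  have hle : ∀ x, (a x - c x) / a x ≤ 1 := fun x => by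
    rw [div_le_one (hapos x)]
    linarith [hc0 x]
  refine ⟨part1, ?_, ?_⟩
  · rw [hTr]
    calc ∑ x, (a x - c x) / a x ≤ ∑ _x : Fin n, (1:ℝ) :=
          Finset.sum_le_sum fun x _ => hle x
      _ = n := by simp
  · rw [hTr, show (n:ℝ) = ∑ _x : Fin n, (1:ℝ) by simp,
      Finset.sum_eq_sum_iff_of_le (fun x _ => hle x)]
    constructor
    · intro h x
      have h1 := h x (Finset.mem_univ x)
      have hcx0 : c x = 0 := by
        have h2 := (div_eq_one_iff_eq (hapos x).ne').mp h1
        linarith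
      exact (sub_eq_zero.mp (hcx x hcx0)).symm
    · intro h x _
      have hcx0 : c x = 0 := by
        have h2 := hceq x
        rw [show A x - A x * A x = 0 from by rw [h x]; exact sub_self _] at h2
        have : ((c x : ℝ) : ℂ) = 0 := by simpa using h2.symm
        exact_mod_cast this
      rw [hcx0, sub_zero, div_self (hapos x).ne']
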